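/- (Nested claim in the proof of Proposition 1(8)) For any machine j, any location x, any value v, and any configurations γ_1, γ_2, γ_3, γ_4: if γ_1 →^{RStore_j(x,v)} γ_2, γ_3 is reachable from γ_2 by a (possibly empty) finite sequence consisting solely of silent τ-steps (internal propagation steps), and γ_3 →^{RFlush_j(x)} γ_4, then γ_1 ⇒^{MStore_j(x,v)} γ_4, i.e., γ_4 is reachable from γ_1 by a transition sequence consisting of MStore_j(x,v) possibly interleaved with silent τ-steps. -/

import Mathlib

/-!  The CXL0 model.

We fix an abstract type `Machine` of machines, a type `Loc` of shared
locations, and a type `Val` of values with a distinguished value `z`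
(playing the role of the value `0`).  The partition of `Loc` into the
pairwise disjoint sets `Loc_1, …, Loc_N` is encoded by an ownership map
`owner : Loc → Machine` (so `x ∈ Loc_k` iff `owner x = k`).  Volatility of
each machine's memory is given by `vol : Machine → Bool` (`vol i = true`
means machine `i`'s memory is volatile).

A configuration `γ = (Cache, Mem)` is modeled by total maps
`cache : Machine → Loc → Option Val` (with `none` playing the role of `⊥`)
and `mem : Machine → Loc → Val` (the entries of `mem i` at locations not
owned by `i` are irrelevant; the transitions never consult them). -/

/-- Transition labels of the CXL0 labeled transition system. -/
inductive CXLLabel (Machine Loc Val : Type) : Type where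
  | LStore (i : Machine) (x : Loc) (v : Val)
  | RStore (i : Machine) (x : Loc) (v : Val)
  | MStore (i : Machine) (x : Loc) (v : Val)
  | Load   (i : Machine) (x : Loc) (v : Val)
  | LFlush (i : Machine) (x : Loc)
  | RFlush (i : Machine) (x : Loc)
  | GPF    (i : Machine)
  | Crash  (i : Machine)
  | tau

/-- Configurations of the CXL0 model. -/
structure CXLConfig (Machine Loc Val : Type) : Type where
  cache : Machine → Loc → Option Val
  mem   : Machine → Loc → Val

variable {Machine Loc Val : Type} [DecidableEq Machine] [DecidableEq Loc]

/-- Single labeled transition of the CXL0 model. -/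
inductive CXLStep (owner : Loc → Machine) (vol : Machine → Bool) (z : Val) :
    CXLConfig Machine Loc Val → CXLLabel Machine Loc Val →
      CXLConfig Machine Loc Val → Prop where
  | lstore (γ : CXLConfig Machine Loc Val) (i : Machine) (x : Loc) (v : Val) :
      CXLStep owner vol z γ (.LStore i x v)
        ⟨fun j y => if y = x then (if j = i then some v else none) else γ.cache j y,
         γ.mem⟩
  | rstore (γ : CXLConfig Machine Loc Val) (i : Machine) (x : Loc) (v : Val) :
      CXLStep owner vol z γ (.RStore i x v)
        ⟨fun j y => if y = x then (if j = owner x then some v else none) else γ.cache j y,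
         γ.mem⟩
  | mstore (γ : CXLConfig Machine Loc Val) (i : Machine) (x : Loc) (v : Val) :
      CXLStep owner vol z γ (.MStore i x v)
        ⟨fun j y => if y = x then none else γ.cache j y,
         fun j y => if j = owner x ∧ y = x then v else γ.mem j y⟩
  | load_cache (γ : CXLConfig Machine Loc Val) (i j : Machine) (x : Loc) (v : Val)
      (h : γ.cache j x = some v) :
      CXLStep owner vol z γ (.Load i x v)
        ⟨fun j' y => if j' = i ∧ y = x then some v else γ.cache j' y, γ.mem⟩
  | load_mem (γ : CXLConfig Machine Loc Val) (i : Machine) (x : Loc) (v : Val)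
      (h : ∀ j, γ.cache j x = none) (hm : γ.mem (owner x) x = v) :
      CXLStep owner vol z γ (.Load i x v) γ
  | lflush (γ : CXLConfig Machine Loc Val) (i : Machine) (x : Loc)
      (h : γ.cache i x = none) :
      CXLStep owner vol z γ (.LFlush i x) γ
  | rflush (γ : CXLConfig Machine Loc Val) (i : Machine) (x : Loc)
      (h : ∀ j, γ.cache j x = none) :
      CXLStep owner vol z γ (.RFlush i x) γ
  | gpf (γ : CXLConfig Machine Loc Val) (i : Machine)
      (h : ∀ j y, γ.cache j y = none) :
      CXLStep owner vol z γ (.GPF i) γ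
  | prop_cache_cache (γ : CXLConfig Machine Loc Val) (i : Machine) (x : Loc) (v : Val)
      (hik : i ≠ owner x) (h : γ.cache i x = some v) :
      CXLStep owner vol z γ .tau
        ⟨fun j y => if y = x then
            (if j = owner x then some v else if j = i then none else γ.cache j y)
          else γ.cache j y,
         γ.mem⟩
  | prop_cache_mem (γ : CXLConfig Machine Loc Val) (x : Loc) (v : Val)
      (h : γ.cache (owner x) x = some v) :
      CXLStep owner vol z γ .tau
        ⟨fun j y => if y = x then none else γ.cache j y,
         fun j y => if j = owner x ∧ y = x then v else γ.mem j y⟩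
  | crash (γ : CXLConfig Machine Loc Val) (i : Machine) :
      CXLStep owner vol z γ (.Crash i)
        ⟨fun j y => if j = i then none else γ.cache j y,
         fun j y => if j = i ∧ vol i then z else γ.mem j y⟩

/-- `CXLTrace owner vol z γ ls γ'` : `γ'` is reachable from `γ` by a sequence of
transitions labeled by the elements of `ls`, in this order, possibly interleaved
with additional silent `τ`-steps (this is the `γ ⇒^{α_1⋯α_n} γ'` relation). -/
inductive CXLTrace (owner : Loc → Machine) (vol : Machine → Bool) (z : Val) :
    CXLConfig Machine Loc Val → List (CXLLabel Machine Loc Val) →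
      CXLConfig Machine Loc Val → Prop where
  | nil (γ : CXLConfig Machine Loc Val) : CXLTrace owner vol z γ [] γ
  | tau {γ γ' γ'' : CXLConfig Machine Loc Val} {ls : List (CXLLabel Machine Loc Val)}
      (h : CXLStep owner vol z γ .tau γ') (ht : CXLTrace owner vol z γ' ls γ'') :
      CXLTrace owner vol z γ ls γ''
  | cons {γ γ' γ'' : CXLConfig Machine Loc Val} {l : CXLLabel Machine Loc Val}
      {ls : List (CXLLabel Machine Loc Val)}
      (h : CXLStep owner vol z γ l γ') (ht : CXLTrace owner vol z γ' ls γ'') :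
      CXLTrace owner vol z γ (l :: ls) γ''

/-- Reachability by a (possibly empty) finite sequence of silent `τ`-steps. -/
def CXLTauSteps (owner : Loc → Machine) (vol : Machine → Bool) (z : Val) :
    CXLConfig Machine Loc Val → CXLConfig Machine Loc Val → Prop :=
  Relation.ReflTransGen (fun a b => CXLStep owner vol z a .tau b)

/-- The initial configuration `γ_0`: all caches empty, all memories `0`. -/
def CXLInit (Machine Loc : Type) (z : Val) : CXLConfig Machine Loc Val :=
  ⟨fun _ _ => none, fun _ _ => z⟩

/-- Nested claim in the proof of Proposition 1(8): an `RStore`, followed by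
internal propagation steps and an `RFlush`, is simulated by an `MStore`
(up to `τ`-steps). -/
lemma CXLConfig.ext' {a b : CXLConfig Machine Loc Val}
    (hc : ∀ i y, a.cache i y = b.cache i y) (hm : ∀ i y, a.mem i y = b.mem i y) :
    a = b := by
  cases a; cases b
  simp only [CXLConfig.mk.injEq]
  exact ⟨funext fun i => funext (hc i), funext fun i => funext (hm i)⟩

/-- The "MStore image" of a configuration: cache at `x` erased everywhere,
memory of `owner x` at `x` set to `v`. -/
def fconf (owner : Loc → Machine) (x : Loc) (v : Val)
    (δ : CXLConfig Machine Loc Val) : CXLConfig Machine Loc Val :=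
  ⟨fun i y => if y = x then none else δ.cache i y,
   fun i y => if i = owner x ∧ y = x then v else δ.mem i y⟩

/-- Invariant preserved by τ-steps after an `RStore` of `v` at `x`. -/
def CXLInv (owner : Loc → Machine) (x : Loc) (v : Val)
    (δ : CXLConfig Machine Loc Val) : Prop :=
  (∀ i, δ.cache i x = if i = owner x then some v else none) ∨
  ((∀ i, δ.cache i x = none) ∧ δ.mem (owner x) x = v)

lemma cxl_key (owner : Loc → Machine) (vol : Machine → Bool) (z : Val)
    (x : Loc) (v : Val) {δ δ' : CXLConfig Machine Loc Val}
    (h : CXLStep owner vol z δ .tau δ') (hI : CXLInv owner x v δ) :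
    CXLInv owner x v δ' ∧ (fconf owner x v δ' = fconf owner x v δ ∨
      CXLStep owner vol z (fconf owner x v δ) .tau (fconf owner x v δ')) := by
  cases h with
  | prop_cache_cache i y w hik hc =>
    by_cases hyx : y = x
    · subst hyx
      exfalso
      rcases hI with h1 | h2
      · have := (h1 i).symm.trans hc
        rw [if_neg hik] at this
        exact nomatch this
      · exact nomatch ((h2.1 i).symm.trans hc)
    · constructor
      · rcases hI with h1 | h2
        · left; intro i'
          simpa [if_neg (Ne.symm hyx)] using h1 i'
        · right
          refine ⟨fun i' => ?_, h2.2⟩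
          simpa [if_neg (Ne.symm hyx)] using h2.1 i'
      · right
        have hstep := CXLStep.prop_cache_cache (owner := owner) (vol := vol) (z := z)
          (fconf owner x v δ) i y w hik (by simp [fconf, hyx, hc])
        have heq : (⟨fun j' y' => if y' = y then
              (if j' = owner y then some w else if j' = i then none
                else (fconf owner x v δ).cache j' y')
            else (fconf owner x v δ).cache j' y',
            (fconf owner x v δ).mem⟩ : CXLConfig Machine Loc Val) =
            fconf owner x v (⟨fun j' y' => if y' = y then
              (if j' = owner y then some w else if j' = i then none else δ.cache j' y')
            else δ.cache j' y', δ.mem⟩) := by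
          refine CXLConfig.ext' (fun i' y' => ?_) (fun i' y' => ?_) <;>
            simp only [fconf] <;> split_ifs <;> simp_all
        exact heq ▸ hstep
  | prop_cache_mem y w hc =>
    by_cases hyx : y = x
    · subst hyx
      rcases hI with h1 | h2
      · have hw : w = v := by
          have h0 := h1 (owner y)
          rw [hc, if_pos rfl] at h0
          exact Option.some.inj h0
        subst hw
        constructor
        · right
          constructor
          · intro i'; simp
          · simp
        · left
          refine CXLConfig.ext' (fun i' y' => ?_) (fun i' y' => ?_) <;>
            simp only [fconf] <;> split_ifs <;> simp_all
      · exact absurd ((h2.1 (owner y)).symm.trans hc) (by simp)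
    · constructor
      · rcases hI with h1 | h2
        · left; intro i'
          simpa [if_neg (Ne.symm hyx)] using h1 i'
        · right
          refine ⟨fun i' => ?_, ?_⟩
          · simpa [if_neg (Ne.symm hyx)] using h2.1 i'
          · have : ¬ (owner x = owner y ∧ x = y) := fun ⟨_, h⟩ => hyx h.symm
            simpa [this] using h2.2
      · right
        have hstep := CXLStep.prop_cache_mem (owner := owner) (vol := vol) (z := z)
          (fconf owner x v δ) y w (by simp [fconf, hyx, hc])
        have heq : (⟨fun j' y' => if y' = y then none else (fconf owner x v δ).cache j' y',
            fun j' y' => if j' = owner y ∧ y' = y then w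
              else (fconf owner x v δ).mem j' y'⟩ : CXLConfig Machine Loc Val) =
            fconf owner x v (⟨fun j' y' => if y' = y then none else δ.cache j' y',
              fun j' y' => if j' = owner y ∧ y' = y then w else δ.mem j' y'⟩) := by
          refine CXLConfig.ext' (fun i' y' => ?_) (fun i' y' => ?_) <;>
            simp only [fconf] <;> split_ifs <;> simp_all
        exact heq ▸ hstep

lemma cxl_taus_key (owner : Loc → Machine) (vol : Machine → Bool) (z : Val)
    (x : Loc) (v : Val) {δ δ' : CXLConfig Machine Loc Val}
    (h : CXLTauSteps owner vol z δ δ') (hI : CXLInv owner x v δ) :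
    CXLInv owner x v δ' ∧
      CXLTauSteps owner vol z (fconf owner x v δ) (fconf owner x v δ') := by
  induction h with
  | refl => exact ⟨hI, Relation.ReflTransGen.refl⟩
  | tail _ hbc ih =>
    obtain ⟨hIb, hT⟩ := ih
    obtain ⟨hI', hor⟩ := cxl_key owner vol z x v hbc hIb
    refine ⟨hI', ?_⟩
    rcases hor with he | hs
    · rw [he]; exact hT
    · exact hT.tail hs

lemma cxl_trace_of_taus (owner : Loc → Machine) (vol : Machine → Bool) (z : Val)
    {δ δ' : CXLConfig Machine Loc Val} (h : CXLTauSteps owner vol z δ δ') :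
    CXLTrace owner vol z δ [] δ' := by
  induction h using Relation.ReflTransGen.head_induction_on with
  | refl => exact .nil _
  | head hstep _ ih => exact .tau hstep ih

theorem rstore_taus_rflush_simulated_by_mstore
    (owner : Loc → Machine) (vol : Machine → Bool) (z : Val)
    (j : Machine) (x : Loc) (v : Val)
    (γ₁ γ₂ γ₃ γ₄ : CXLConfig Machine Loc Val)
    (h1 : CXLStep owner vol z γ₁ (.RStore j x v) γ₂)
    (h2 : CXLTauSteps owner vol z γ₂ γ₃)
    (h3 : CXLStep owner vol z γ₃ (.RFlush j x) γ₄) :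
    CXLTrace owner vol z γ₁ [.MStore j x v] γ₄ := by
  cases h1 with
  | rstore _ _ _ =>
    cases h3 with
    | rflush _ _ hnone =>
      have hI2 : CXLInv owner x v
          ⟨fun j' y => if y = x then (if j' = owner x then some v else none)
            else γ₁.cache j' y, γ₁.mem⟩ := by
        left; intro i'; simp
      obtain ⟨hI3, hT⟩ := cxl_taus_key owner vol z x v h2 hI2
      have hmem3 : γ₃.mem (owner x) x = v := by
        rcases hI3 with h1' | h2'
        · have h0 := h1' (owner x)
          rw [hnone (owner x), if_pos rfl] at h0
          exact nomatch h0
        · exact h2'.2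
      have hf3 : fconf owner x v γ₃ = γ₃ := by
        refine CXLConfig.ext' (fun i' y' => ?_) (fun i' y' => ?_) <;>
          simp only [fconf] <;> split_ifs <;> simp_all
      have hf2 : fconf owner x v
          ⟨fun j' y => if y = x then (if j' = owner x then some v else none)
            else γ₁.cache j' y, γ₁.mem⟩ =
          ⟨fun j y => if y = x then none else γ₁.cache j y,
           fun j y => if j = owner x ∧ y = x then v else γ₁.mem j y⟩ := by
        refine CXLConfig.ext' (fun i' y' => ?_) (fun i' y' => ?_) <;>
          simp only [fconf] <;> split_ifs <;> simp_all
      refine CXLTrace.cons (CXLStep.mstore γ₁ j x v) ?_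
      rw [← hf2]
      rw [hf3] at hT
      exact cxl_trace_of_taus owner vol z hT
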